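/- arXiv:2405.13439 — 2 statements merged into one kernel-verified Lean document; each statement's English description precedes it below -/
import Mathlib

section
/- The sequence S_n = Σ_{k=0}^{n−1} [n brack n−k] ((n−k)!/n!)² c^k converges to e^{c/2} as n → ∞, for every fixed real c ≥ 0. -/
open Polynomial Filter

/-- Unsigned Stirling numbers of the first kind. -/
noncomputable def stirling1 (n k : ℕ) : ℕ := (ascPochhammer ℕ n).coeff k


lemma stirling1_self (n : ℕ) : stirling1 n n = 1 := by
  have h := monic_ascPochhammer ℕ n
  have hd := ascPochhammer_natDegree ℕ n  -- maybe name wrong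
  simpa [stirling1, hd] using h.coeff_natDegree

lemma stirling1_zero (n : ℕ) (hn : 1 ≤ n) : stirling1 n 0 = 0 := by
  unfold stirling1
  rw [coeff_zero_eq_eval_zero]
  obtain ⟨m, rfl⟩ := Nat.exists_eq_succ_of_ne_zero (by omega : n ≠ 0)
  rw [ascPochhammer_succ_left]
  simp

lemma stirling1_of_gt {n k : ℕ} (h : n < k) : stirling1 n k = 0 := by
  unfold stirling1
  apply coeff_eq_zero_of_natDegree_lt
  rwa [ascPochhammer_natDegree]

lemma stirling1_rec (n k : ℕ) :
    stirling1 (n+1) (k+1) = stirling1 n k + n * stirling1 n (k+1) := by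
  unfold stirling1
  rw [ascPochhammer_succ_right]
  simp [coeff_mul_X, mul_add, coeff_natCast_mul]
  ring

/-- `b n k = [n brack n-k]`. -/
noncomputable def bb (n k : ℕ) : ℕ := stirling1 n (n - k)

lemma bb_zero (n : ℕ) : bb n 0 = 1 := by simpa [bb] using stirling1_self n

lemma bb_of_le {n k : ℕ} (hn : 1 ≤ n) (h : n ≤ k) : bb n k = 0 := by
  unfold bb
  rw [Nat.sub_eq_zero_of_le h]
  exact stirling1_zero n hn

lemma bb_rec {n k : ℕ} (h1 : 1 ≤ k) (h2 : k ≤ n) :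
    bb (n+1) k = bb n k + n * bb n (k-1) := by
  unfold bb
  have e1 : n + 1 - k = (n - k) + 1 := by omega
  have e2 : n - (k - 1) = (n - k) + 1 := by omega
  rw [e1, e2, stirling1_rec]

/-- key factorial bound, all ℕ -/
lemma bound_U : ∀ n k, k ≤ n →
    k.factorial * bb n k * ((n-k).factorial)^2 ≤ (n.factorial)^2 := by
  intro n
  induction n with
  | zero => intro k hk; interval_cases k; simp [bb_zero]
  | succ n ih =>
    intro k hk
    rcases Nat.eq_zero_or_pos k with rfl | hk1
    · simp [bb_zero]
    rcases eq_or_lt_of_le hk with rfl | hkn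
    · rw [bb_of_le (by omega) le_rfl]; simp
    have hkn' : k ≤ n := by omega
    obtain ⟨j, rfl⟩ : ∃ j, k = j + 1 := ⟨k - 1, by omega⟩
    rw [bb_rec hk1 hkn']
    simp only [Nat.add_sub_cancel]
    have h1 := ih (j+1) hkn'
    have h2 := ih j (by omega)
    obtain ⟨a, rfl⟩ : ∃ a, n = (j+1) + a := ⟨n - (j+1), by omega⟩
    have e1 : j + 1 + a + 1 - (j + 1) = a + 1 := by omega
    have e2 : j + 1 + a - (j + 1) = a := by omega
    have e3 : j + 1 + a - j = a + 1 := by omega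
    rw [e1]
    rw [e2] at h1
    rw [e3] at h2
    set n := j + 1 + a with hn
    have key : (j+1).factorial * (bb n (j+1) + n * bb n j) * ((a+1).factorial)^2
        = (a+1)^2 * ((j+1).factorial * bb n (j+1) * (a.factorial)^2)
          + ((j+1) * n) * (j.factorial * bb n j * ((a+1).factorial)^2) := by
      rw [Nat.factorial_succ a, Nat.factorial_succ j]
      ring
    rw [key]
    have t1 : (a+1)^2 * ((j+1).factorial * bb n (j+1) * (a.factorial)^2)
        ≤ (a+1)^2 * (n.factorial)^2 := Nat.mul_le_mul_left _ h1
    have t2 : ((j+1) * n) * (j.factorial * bb n j * ((a+1).factorial)^2)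
        ≤ ((j+1) * n) * (n.factorial)^2 := Nat.mul_le_mul_left _ h2
    have t3 : (a+1)^2 * (n.factorial)^2 + ((j+1) * n) * (n.factorial)^2
        ≤ ((n+1).factorial)^2 := by
      rw [Nat.factorial_succ, mul_pow]
      have : (a+1)^2 + (j+1) * n ≤ (n+1)^2 := by rw [hn]; nlinarith
      calc (a+1)^2 * (n.factorial)^2 + ((j+1) * n) * (n.factorial)^2
          = ((a+1)^2 + (j+1) * n) * (n.factorial)^2 := by ring
        _ ≤ (n+1)^2 * (n.factorial)^2 := Nat.mul_le_mul_right _ this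
    omega

lemma pow_succ_bound (n : ℕ) : ∀ m, n^(m+1) + (m+1) * n^m ≤ (n+1)^(m+1) := by
  intro m
  induction m with
  | zero => simp
  | succ m ih =>
    have : (n+1)^(m+2) = (n+1)^(m+1) * (n+1) := by ring
    rw [this]
    calc n^(m+2) + (m+2) * n^(m+1)
        ≤ (n^(m+1) + (m+1) * n^m) * (n+1) := by ring_nf; omega
      _ ≤ (n+1)^(m+1) * (n+1) := Nat.mul_le_mul_right _ ih

lemma bound_Upper : ∀ n k, k ≤ n → 2^k * k.factorial * bb n k ≤ n^(2*k) := by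
  intro n
  induction n with
  | zero => intro k hk; interval_cases k; simp [bb_zero]
  | succ n ih =>
    intro k hk
    rcases Nat.eq_zero_or_pos k with rfl | hk1
    · simp [bb_zero]
    rcases eq_or_lt_of_le hk with rfl | hkn
    · rw [bb_of_le (by omega) le_rfl]; simp
    have hkn' : k ≤ n := by omega
    obtain ⟨j, rfl⟩ : ∃ j, k = j + 1 := ⟨k - 1, by omega⟩
    rw [bb_rec hk1 hkn']
    simp only [Nat.add_sub_cancel]
    have h1 := ih (j+1) hkn'
    have h2 := ih j (by omega)
    have key : 2^(j+1) * (j+1).factorial * (bb n (j+1) + n * bb n j)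
        = 2^(j+1) * (j+1).factorial * bb n (j+1)
          + (2*(j+1)*n) * (2^j * j.factorial * bb n j) := by
      rw [Nat.factorial_succ j, pow_succ]
      ring
    rw [key]
    calc 2^(j+1) * (j+1).factorial * bb n (j+1) + (2*(j+1)*n) * (2^j * j.factorial * bb n j)
        ≤ n^(2*(j+1)) + (2*(j+1)*n) * n^(2*j) :=
          Nat.add_le_add h1 (Nat.mul_le_mul_left _ h2)
      _ = n^(2*j+2) + (2*j+2) * n^(2*j+1) := by ring
      _ ≤ (n+1)^(2*j+2) := pow_succ_bound n (2*j+1)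
      _ = (n+1)^(2*(j+1)) := by ring

noncomputable def PZ (x : ℤ) (k : ℕ) : ℤ :=
  ∏ i ∈ Finset.range k, ((x - 2*i) * (x - 2*i - 1))

lemma PZ_nonneg (x : ℤ) (k : ℕ) : 0 ≤ PZ x k := by
  apply Finset.prod_nonneg
  intro i _
  rcases le_or_gt 1 (x - 2*i) with h | h
  · exact mul_nonneg (by omega) (by omega)
  · have h2 := mul_nonneg (by omega : (0:ℤ) ≤ -(x-2*i)) (by omega : (0:ℤ) ≤ -(x-2*i-1))
    nlinarith [h2]

lemma PZ_eq_zero {n k : ℕ} (h : n < 2*k) : PZ (n:ℤ) k = 0 := by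
  apply Finset.prod_eq_zero (i := n/2) (Finset.mem_range.2 (by omega))
  have h2 : (n:ℤ) - 2*((n/2 : ℕ) : ℤ) = ((n % 2 : ℕ) : ℤ) := by
    have := Nat.div_add_mod n 2
    push_cast
    omega
  rw [h2]
  have : n % 2 = 0 ∨ n % 2 = 1 := by omega
  rcases this with h3 | h3 <;> simp [h3]

lemma PZ_succ_left (x : ℤ) (j : ℕ) :
    PZ (x+1) (j+1) = (x+1) * (x - 2*j) * PZ x j := by
  unfold PZ
  rw [Finset.prod_mul_distrib, Finset.prod_mul_distrib]
  have e1 : ∏ i ∈ Finset.range (j+1), (x + 1 - 2*(i:ℤ))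
      = (∏ i ∈ Finset.range j, (x - 2*(i:ℤ) - 1)) * (x+1) := by
    rw [Finset.prod_range_succ']
    congr 1
    · apply Finset.prod_congr rfl
      intro i _
      push_cast
      ring
    · simp
  have e2 : ∏ i ∈ Finset.range (j+1), (x + 1 - 2*(i:ℤ) - 1)
      = (∏ i ∈ Finset.range j, (x - 2*(i:ℤ))) * (x - 2*j) := by
    rw [Finset.prod_range_succ]
    congr 1
    · apply Finset.prod_congr rfl
      intro i _
      ring
    · push_cast
      ring
  rw [e1, e2]
  ring

lemma bound_Lower : ∀ (n k : ℕ), k ≤ n → PZ (n:ℤ) k ≤ 2^k * k.factorial * (bb n k : ℤ) := by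
  intro n
  induction n with
  | zero => intro k hk; interval_cases k; simp [PZ, bb_zero]
  | succ n ih =>
    intro k hk
    rcases Nat.eq_zero_or_pos k with rfl | hk1
    · simp [PZ, bb_zero]
    rcases eq_or_lt_of_le hk with rfl | hkn
    · rw [PZ_eq_zero (by omega), bb_of_le (by omega) le_rfl]
      simp
    have hkn' : k ≤ n := by omega
    obtain ⟨j, rfl⟩ : ∃ j, k = j + 1 := ⟨k - 1, by omega⟩
    rw [bb_rec hk1 hkn']
    simp only [Nat.add_sub_cancel]
    have h1 := ih (j+1) hkn'
    have h2 := ih j (by omega)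
    have key : (2:ℤ)^(j+1) * (j+1).factorial * ((bb n (j+1) : ℕ) + n * bb n j : ℕ)
        = 2^(j+1) * (j+1).factorial * (bb n (j+1) : ℤ)
          + (2*(j+1)*n) * (2^j * (j.factorial : ℤ) * (bb n j : ℤ)) := by
      rw [Nat.factorial_succ j]
      push_cast
      ring
    rw [key]
    have step1 : PZ (n:ℤ) (j+1) + (2*(j+1)*(n:ℤ)) * PZ (n:ℤ) j
        ≤ 2^(j+1) * (j+1).factorial * (bb n (j+1) : ℤ)
          + (2*(j+1)*n) * (2^j * (j.factorial : ℤ) * (bb n j : ℤ)) := by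
      apply add_le_add h1
      apply mul_le_mul_of_nonneg_left h2 (by positivity)
    refine le_trans ?_ step1
    have expand : PZ (n:ℤ) (j+1) = PZ (n:ℤ) j * (((n:ℤ) - 2*j) * ((n:ℤ) - 2*j - 1)) :=
      Finset.prod_range_succ _ _
    rw [show ((n+1 : ℕ):ℤ) = (n:ℤ)+1 by push_cast; ring, PZ_succ_left (n:ℤ) j, expand]
    have hfac : ((n:ℤ)+1) * ((n:ℤ) - 2*j)
        ≤ ((n:ℤ) - 2*j) * ((n:ℤ) - 2*j - 1) + 2*(j+1)*(n:ℤ) := by nlinarith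
    calc ((n:ℤ)+1) * ((n:ℤ) - 2*j) * PZ (n:ℤ) j
        ≤ (((n:ℤ) - 2*j) * ((n:ℤ) - 2*j - 1) + 2*(j+1)*(n:ℤ)) * PZ (n:ℤ) j :=
          mul_le_mul_of_nonneg_right hfac (PZ_nonneg _ _)
      _ = PZ (n:ℤ) j * (((n:ℤ) - 2*j) * ((n:ℤ) - 2*j - 1)) + 2*(j+1)*(n:ℤ) * PZ (n:ℤ) j := by
          ring

open Topology in
lemma tendsto_ratio (a b : ℝ) :
    Tendsto (fun n : ℕ => ((n:ℝ) - a) / ((n:ℝ) - b)) atTop (𝓝 1) := by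
  have h0 : Tendsto (fun n : ℕ => (n:ℝ) - b) atTop atTop :=
    tendsto_atTop_add_const_right _ (-b) tendsto_natCast_atTop_atTop |>.congr (by intro n; ring)
  have h1 : Tendsto (fun n : ℕ => (b - a) / ((n:ℝ) - b)) atTop (𝓝 0) :=
    Filter.Tendsto.div_atTop tendsto_const_nhds h0
  have h2 : Tendsto (fun n : ℕ => 1 + (b - a) / ((n:ℝ) - b)) atTop (𝓝 1) := by
    simpa using tendsto_const_nhds.add h1
  apply h2.congr'
  filter_upwards [h0.eventually_gt_atTop 0] with n hn
  field_simp
  ring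

open Topology in
lemma tendsto_bb (k : ℕ) :
    Tendsto (fun n : ℕ => (bb n k : ℝ) * (((n - k).factorial : ℝ) / (n.factorial : ℝ))^2)
      atTop (𝓝 (1 / (2^k * k.factorial))) := by
  set C : ℝ := 2^k * k.factorial with hCdef
  have hC : 0 < C := by positivity
  have hlo : Tendsto (fun n : ℕ =>
      (∏ i ∈ Finset.range k,
        ((((n:ℝ) - 2*i) / ((n:ℝ) - i)) * (((n:ℝ) - 2*i - 1) / ((n:ℝ) - i)))) / C)
      atTop (𝓝 (1 / C)) := by
    have hprod : Tendsto (fun n : ℕ => ∏ i ∈ Finset.range k,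
        ((((n:ℝ) - 2*i) / ((n:ℝ) - i)) * (((n:ℝ) - 2*i - 1) / ((n:ℝ) - i)))) atTop (𝓝 1) := by
      have h1 : (1:ℝ) = ∏ _i ∈ Finset.range k, ((1:ℝ) * 1) := by simp
      rw [h1]
      exact tendsto_finset_prod _ fun i _ =>
        ((tendsto_ratio (2*i) i).mul
          (by simpa [sub_sub] using tendsto_ratio (2*(i:ℝ)+1) (i:ℝ)))
    exact hprod.div_const C
  have hhi : Tendsto (fun n : ℕ =>
      (∏ i ∈ Finset.range k, ((n:ℝ) / ((n:ℝ) - i))^2) / C) atTop (𝓝 (1 / C)) := by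
    have hprod : Tendsto (fun n : ℕ => ∏ i ∈ Finset.range k,
        ((n:ℝ) / ((n:ℝ) - i))^2) atTop (𝓝 1) := by
      have h1 : (1:ℝ) = ∏ _i ∈ Finset.range k, ((1:ℝ))^2 := by simp
      rw [h1]
      exact tendsto_finset_prod _ fun i _ =>
        (by simpa [sub_zero] using (tendsto_ratio 0 (i:ℝ)).pow 2)
    exact hprod.div_const C
  apply tendsto_of_tendsto_of_tendsto_of_le_of_le' hlo hhi
  · -- lower bound eventually
    filter_upwards [eventually_ge_atTop (2*k+1)] with n hn
    have hkn : k ≤ n := by omega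
    have hDpos : ∀ i ∈ Finset.range k, (0:ℝ) < (n:ℝ) - i := by
      intro i hi
      have : i < n := lt_of_lt_of_le (Finset.mem_range.1 hi) (by omega)
      have : (i:ℝ) < n := by exact_mod_cast this
      linarith
    set D : ℝ := ∏ i ∈ Finset.range k, ((n:ℝ) - i) with hDdef
    have hD : 0 < D := Finset.prod_pos hDpos
    have hdesc : ((n.descFactorial k : ℕ) : ℝ) = D := by
      rw [Nat.descFactorial_eq_prod_range, Nat.cast_prod]
      apply Finset.prod_congr rfl
      intro i hi
      have : i ≤ n := le_of_lt (lt_of_lt_of_le (Finset.mem_range.1 hi) hkn)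
      push_cast [Nat.cast_sub this]
      ring
    have hfrac : (((n - k).factorial : ℝ) / (n.factorial : ℝ)) = 1 / D := by
      have h := Nat.factorial_mul_descFactorial hkn
      have h2 : ((n - k).factorial : ℝ) * D = (n.factorial : ℝ) := by
        rw [← hdesc, ← Nat.cast_mul, h]
      rw [← h2]
      field_simp
    rw [hfrac]
    have hPZ : ((PZ (n:ℤ) k : ℤ) : ℝ)
        = ∏ i ∈ Finset.range k, (((n:ℝ) - 2*i) * ((n:ℝ) - 2*i - 1)) := by
      unfold PZ
      push_cast
      rfl
    have hprod_eq : (∏ i ∈ Finset.range k,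
        ((((n:ℝ) - 2*i) / ((n:ℝ) - i)) * (((n:ℝ) - 2*i - 1) / ((n:ℝ) - i))))
        = ((PZ (n:ℤ) k : ℤ) : ℝ) / D^2 := by
      rw [hPZ]
      rw [show (∏ i ∈ Finset.range k,
          ((((n:ℝ) - 2*i) / ((n:ℝ) - i)) * (((n:ℝ) - 2*i - 1) / ((n:ℝ) - i))))
          = ∏ i ∈ Finset.range k,
            ((((n:ℝ) - 2*i) * ((n:ℝ) - 2*i - 1)) / (((n:ℝ) - i)^2)) from
        Finset.prod_congr rfl fun i _ => by rw [div_mul_div_comm, ← sq]]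
      rw [Finset.prod_div_distrib, ← Finset.prod_pow]
    have hLB : ((PZ (n:ℤ) k : ℤ) : ℝ) ≤ C * (bb n k : ℝ) := by
      have := bound_Lower n k hkn
      have h3 : ((PZ (n:ℤ) k : ℤ) : ℝ) ≤ (((2^k * k.factorial * (bb n k : ℤ)) : ℤ) : ℝ) := by
        exact_mod_cast this
      rw [hCdef]
      push_cast at h3 ⊢
      linarith
    rw [hprod_eq]
    calc (((PZ (n:ℤ) k : ℤ) : ℝ) / D^2) / C = ((PZ (n:ℤ) k : ℤ) : ℝ) / (C * D^2) := by
          ring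
      _ ≤ (C * (bb n k : ℝ)) / (C * D^2) := (div_le_div_iff_of_pos_right (by positivity)).2 hLB
      _ = (bb n k : ℝ) / D^2 := by
          rw [mul_div_mul_left _ _ hC.ne']
      _ = (bb n k : ℝ) * (1/D)^2 := by ring
  · -- upper bound eventually
    filter_upwards [eventually_ge_atTop (2*k+1)] with n hn
    have hkn : k ≤ n := by omega
    have hDpos : ∀ i ∈ Finset.range k, (0:ℝ) < (n:ℝ) - i := by
      intro i hi
      have : i < n := lt_of_lt_of_le (Finset.mem_range.1 hi) (by omega)
      have : (i:ℝ) < n := by exact_mod_cast this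
      linarith
    set D : ℝ := ∏ i ∈ Finset.range k, ((n:ℝ) - i) with hDdef
    have hD : 0 < D := Finset.prod_pos hDpos
    have hdesc : ((n.descFactorial k : ℕ) : ℝ) = D := by
      rw [Nat.descFactorial_eq_prod_range, Nat.cast_prod]
      apply Finset.prod_congr rfl
      intro i hi
      have : i ≤ n := le_of_lt (lt_of_lt_of_le (Finset.mem_range.1 hi) hkn)
      push_cast [Nat.cast_sub this]
      ring
    have hfrac : (((n - k).factorial : ℝ) / (n.factorial : ℝ)) = 1 / D := by
      have h := Nat.factorial_mul_descFactorial hkn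
      have h2 : ((n - k).factorial : ℝ) * D = (n.factorial : ℝ) := by
        rw [← hdesc, ← Nat.cast_mul, h]
      rw [← h2]
      field_simp
    rw [hfrac]
    have hprod_eq : (∏ i ∈ Finset.range k, ((n:ℝ) / ((n:ℝ) - i))^2)
        = (n:ℝ)^(2*k) / D^2 := by
      rw [show (∏ i ∈ Finset.range k, ((n:ℝ) / ((n:ℝ) - i))^2)
          = ∏ i ∈ Finset.range k, ((n:ℝ)^2 / ((n:ℝ) - i)^2) from
        Finset.prod_congr rfl fun i _ => div_pow _ _ 2]
      rw [Finset.prod_div_distrib, ← Finset.prod_pow, Finset.prod_const, Finset.card_range,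
        ← pow_mul]
    have hUB : C * (bb n k : ℝ) ≤ (n:ℝ)^(2*k) := by
      have := bound_Upper n k hkn
      have h3 : ((2^k * k.factorial * bb n k : ℕ) : ℝ) ≤ ((n^(2*k) : ℕ) : ℝ) := by
        exact_mod_cast this
      rw [hCdef]
      push_cast at h3 ⊢
      linarith
    rw [hprod_eq]
    calc (bb n k : ℝ) * (1/D)^2 = (bb n k : ℝ) / D^2 := by ring
      _ = (C * (bb n k : ℝ)) / (C * D^2) := by
          rw [mul_div_mul_left _ _ hC.ne']
      _ ≤ (n:ℝ)^(2*k) / (C * D^2) := (div_le_div_iff_of_pos_right (by positivity)).2 hUB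
      _ = ((n:ℝ)^(2*k) / D^2) / C := by ring

lemma bb_le (n k : ℕ) (h : k ≤ n) :
    (bb n k : ℝ) * (((n - k).factorial : ℝ) / (n.factorial : ℝ))^2 ≤ 1 / k.factorial := by
  have hU := bound_U n k h
  have hcast : (k.factorial : ℝ) * (bb n k : ℝ) * ((n-k).factorial : ℝ)^2
      ≤ (n.factorial : ℝ)^2 := by exact_mod_cast hU
  have hnf : (0:ℝ) < (n.factorial : ℝ) := by positivity
  have hkf : (0:ℝ) < (k.factorial : ℝ) := by positivity
  rw [div_pow, le_div_iff₀ hkf]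
  rw [show (bb n k : ℝ) * (((n-k).factorial : ℝ)^2 / ((n.factorial : ℝ))^2) * (k.factorial : ℝ)
      = ((k.factorial : ℝ) * (bb n k : ℝ) * ((n-k).factorial : ℝ)^2) / ((n.factorial : ℝ))^2
      from by ring, div_le_one (by positivity)]
  exact hcast

open Topology in
theorem stmt_17 (c : ℝ) (hc : 0 ≤ c) :
    Tendsto (fun n : ℕ => ∑ k ∈ Finset.range n,
        (stirling1 n (n - k) : ℝ) *
          ((Nat.factorial (n - k) : ℝ) / Nat.factorial n) ^ 2 * c ^ k)
      atTop (nhds (Real.exp (c / 2))) := by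
  set F : ℕ → ℕ → ℝ := fun n k =>
    if k < n then (bb n k : ℝ) * (((n - k).factorial : ℝ) / (n.factorial : ℝ))^2 * c^k
    else 0 with hF
  have hsum_eq : ∀ n : ℕ, (∑ k ∈ Finset.range n,
      (stirling1 n (n - k) : ℝ) * ((Nat.factorial (n - k) : ℝ) / Nat.factorial n) ^ 2 * c ^ k)
      = ∑' k, F n k := by
    intro n
    rw [tsum_eq_sum (s := Finset.range n) (fun b hb => by
      simp only [hF, Finset.mem_range, not_lt] at hb ⊢
      rw [if_neg (by omega)])]
    apply Finset.sum_congr rfl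
    intro k hk
    have hkn : k < n := Finset.mem_range.1 hk
    simp only [hF, if_pos hkn]
    rfl
  have hmain : Tendsto (fun n : ℕ => ∑' k, F n k) atTop
      (𝓝 (∑' k : ℕ, (1 / (2^k * (k.factorial : ℝ))) * c^k)) := by
    apply tendsto_tsum_of_dominated_convergence (bound := fun k => c^k / k.factorial)
    · exact Real.summable_pow_div_factorial c
    · intro k
      have hev : ∀ᶠ n : ℕ in atTop, (bb n k : ℝ)
          * (((n - k).factorial : ℝ) / (n.factorial : ℝ))^2 * c^k = F n k := by
        filter_upwards [eventually_gt_atTop k] with n hn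
        simp only [hF, if_pos hn]
      exact Tendsto.congr' hev ((tendsto_bb k).mul_const (c^k))
    · apply Eventually.of_forall
      intro n k
      simp only [hF]
      by_cases h : k < n
      · rw [if_pos h]
        have h1 : (0:ℝ) ≤ (bb n k : ℝ) * (((n - k).factorial : ℝ) / (n.factorial : ℝ))^2 * c^k := by
          positivity
        rw [Real.norm_eq_abs, abs_of_nonneg h1]
        have h2 := bb_le n k (le_of_lt h)
        calc (bb n k : ℝ) * (((n - k).factorial : ℝ) / (n.factorial : ℝ))^2 * c^k
            ≤ (1 / k.factorial) * c^k := by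
              apply mul_le_mul_of_nonneg_right h2 (by positivity)
          _ = c^k / k.factorial := by ring
      · rw [if_neg h]
        simp only [norm_zero]
        positivity
  have hexp : (∑' k : ℕ, (1 / (2^k * (k.factorial : ℝ))) * c^k) = Real.exp (c/2) := by
    rw [Real.exp_eq_exp_ℝ, NormedSpace.exp_eq_tsum_div]
    apply tsum_congr
    intro k
    rw [div_pow]
    field_simp
  rw [← hexp]
  exact hmain.congr (fun n => (hsum_eq n).symm)
end

section
/- For every real t > 0 and every n ≥ 1 and v ∈ [−π/2, π/2], |r_n(t+iv)| ≤ C_t q_t^{n+1}, where q_t = sqrt((t² + (π/2)²)/(t² + (3π/2)²)) < 1 and C_t is independent of n; in particular r_n(t+iv) → 0 exponentially fast uniformly on [−π/2, π/2]. -/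
open Filter

/-- `r_n(z) = ∑_{ℓ ∈ ℤ, ℓ ≠ 0} (1 + 2πiℓ/z)^{-(n+1)}`. -/
noncomputable def rfn (n : ℕ) (z : ℂ) : ℂ :=
  ∑' ℓ : ℤ, if ℓ = 0 then 0
    else ((1 + (2 * Real.pi * Complex.I * ℓ) / z) ^ (n + 1))⁻¹

theorem stmt_19 (t : ℝ) (ht : 0 < t) :
    Real.sqrt ((t ^ 2 + (Real.pi / 2) ^ 2) / (t ^ 2 + (3 * Real.pi / 2) ^ 2)) < 1 ∧
    ∃ C : ℝ, (∀ n : ℕ, 1 ≤ n → ∀ v ∈ Set.Icc (-(Real.pi / 2)) (Real.pi / 2),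
        ‖rfn n (t + v * Complex.I)‖ ≤
          C * Real.sqrt ((t ^ 2 + (Real.pi / 2) ^ 2) /
              (t ^ 2 + (3 * Real.pi / 2) ^ 2)) ^ (n + 1)) ∧
      ∀ v ∈ Set.Icc (-(Real.pi / 2)) (Real.pi / 2),
        Tendsto (fun n : ℕ => ‖rfn n (t + v * Complex.I)‖) atTop (nhds 0) := by
  have hπ := Real.pi_pos
  set P : ℝ := t ^ 2 + (Real.pi / 2) ^ 2 with hPdef
  set Q : ℝ := t ^ 2 + (3 * Real.pi / 2) ^ 2 with hQdef
  set q : ℝ := Real.sqrt (P / Q) with hqdef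
  have hP : 0 < P := by positivity
  have hQ : 0 < Q := by positivity
  have hPQ : P < Q := by
    have : (Real.pi / 2) ^ 2 < (3 * Real.pi / 2) ^ 2 := by nlinarith
    simp only [hPdef, hQdef]; linarith
  have hq0 : 0 < q := Real.sqrt_pos.mpr (div_pos hP hQ)
  have hq1 : q < 1 := by
    rw [hqdef, show (1:ℝ) = Real.sqrt 1 by simp]
    exact Real.sqrt_lt_sqrt (by positivity) ((div_lt_one hQ).mpr hPQ)
  have hq2 : q ^ 2 = P / Q := Real.sq_sqrt (div_pos hP hQ).le
  clear_value P Q q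
  -- the comparison function
  set g : ℤ → ℝ := fun ℓ => if ℓ = 0 then 0 else P / (t ^ 2 + (3 * Real.pi / 2) ^ 2 * (ℓ:ℝ) ^ 2)
    with hgdef
  have hg0 : ∀ ℓ, 0 ≤ g ℓ := by
    intro ℓ
    by_cases h : ℓ = 0 <;> simp [hgdef, h] <;> positivity
  have hgsum : Summable g := by
    refine Summable.of_nonneg_of_le hg0 (fun ℓ => ?_)
      ((Real.summable_one_div_int_pow.mpr one_lt_two).mul_left (P / (3 * Real.pi / 2) ^ 2))
    by_cases h : ℓ = 0
    · simp [hgdef, h]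
    · have hl1 : (1:ℝ) ≤ |(ℓ:ℝ)| := by exact_mod_cast Int.one_le_abs (by simpa using h)
      have hl2 : (0:ℝ) < (ℓ:ℝ) ^ 2 := by nlinarith [sq_abs (ℓ:ℝ)]
      simp only [hgdef, if_neg h]
      rw [div_mul_div_comm, mul_one]
      have hint := mul_nonneg (by positivity : (0:ℝ) ≤ t ^ 2) (le_of_lt hl2)
      apply div_le_div₀ hP.le le_rfl (by positivity)
      nlinarith
  clear_value g
  set S : ℝ := ∑' ℓ, g ℓ with hSdef
  have hS0 : 0 ≤ S := tsum_nonneg hg0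
  clear_value S
  -- main estimate
  have key : ∀ n : ℕ, 1 ≤ n → ∀ v ∈ Set.Icc (-(Real.pi / 2)) (Real.pi / 2),
      ‖rfn n (t + v * Complex.I)‖ ≤ (S / q ^ 2) * q ^ (n + 1) := by
    intro n hn v hv
    obtain ⟨m, rfl⟩ : ∃ m, n = m + 1 := ⟨n - 1, (Nat.succ_pred_eq_of_pos hn).symm⟩
    set z : ℂ := (t:ℝ) + v * Complex.I with hzdef
    have hvb : |v| ≤ Real.pi / 2 := abs_le.mpr ⟨hv.1, hv.2⟩
    have hzre : z.re = t := by simp [hzdef]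
    have hzim : z.im = v := by simp [hzdef]
    have hz : z ≠ 0 := fun h => by rw [h] at hzre; simp at hzre; linarith
    clear_value z
    -- pointwise bound
    have hpt : ∀ ℓ : ℤ, ‖(if ℓ = 0 then 0
        else ((1 + (2 * Real.pi * Complex.I * ℓ) / z) ^ (m + 1 + 1))⁻¹ : ℂ)‖
        ≤ q ^ m * g ℓ := by
      intro ℓ
      by_cases h : ℓ = 0
      · simp [h, hgdef]
      · have hl1 : (1:ℝ) ≤ |(ℓ:ℝ)| := by exact_mod_cast Int.one_le_abs (by simpa using h)
        have hl2 : (1:ℝ) ≤ (ℓ:ℝ) ^ 2 := by nlinarith [sq_abs (ℓ:ℝ)]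
        set w : ℂ := z + 2 * Real.pi * Complex.I * ℓ with hwdef
        have hwre : w.re = t := by simp [hwdef, hzdef]
        have hwim : w.im = v + 2 * Real.pi * ℓ := by
          simp only [hwdef, Complex.add_im, hzim]
          simp
        have hw : w ≠ 0 := fun hh => by rw [hh] at hwre; simp at hwre; linarith
        clear_value w
        have hrw : 1 + (2 * Real.pi * Complex.I * ℓ) / z = w / z := by
          rw [eq_div_iff hz]; field_simp [hwdef]; rw [hwdef]
        have hz2 : ‖z‖ ^ 2 = t ^ 2 + v ^ 2 := by
          rw [Complex.sq_norm, Complex.normSq_apply, hzre, hzim]; ring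
        have hw2 : ‖w‖ ^ 2 = t ^ 2 + (v + 2 * Real.pi * ℓ) ^ 2 := by
          rw [Complex.sq_norm, Complex.normSq_apply, hwre, hwim]; ring
        set r : ℝ := ‖z‖ / ‖w‖ with hrdef
        clear_value r
        have habs : ‖(((1 + (2 * Real.pi * Complex.I * ℓ) / z) ^ (m + 1 + 1))⁻¹ : ℂ)‖
            = r ^ (m + 1 + 1) := by
          rw [hrw, norm_inv, norm_pow, norm_div, ← inv_pow, inv_div,
            ← hrdef]
        have hr0 : 0 ≤ r := by rw [hrdef]; positivity
        have hwpos : 0 < ‖w‖ ^ 2 := by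
          rw [hw2]; positivity
        have hnum : t ^ 2 + v ^ 2 ≤ P := by
          have := sq_le_sq' hv.1 hv.2
          rw [hPdef]; linarith
        have hden : t ^ 2 + (3 * Real.pi / 2) ^ 2 * (ℓ:ℝ) ^ 2
            ≤ t ^ 2 + (v + 2 * Real.pi * ℓ) ^ 2 := by
          have h3 := abs_sub (v + 2 * Real.pi * ℓ) v
          rw [show v + 2 * Real.pi * ℓ - v = 2 * Real.pi * ℓ by ring] at h3
          have h2 : |2 * Real.pi * (ℓ:ℝ)| = 2 * Real.pi * |(ℓ:ℝ)| := by
            rw [abs_mul, abs_of_pos (by positivity : (0:ℝ) < 2 * Real.pi)]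
          have hint := mul_nonneg (by linarith : (0:ℝ) ≤ Real.pi / 2)
            (by linarith : (0:ℝ) ≤ |(ℓ:ℝ)| - 1)
          have h1 : 3 * Real.pi / 2 * |(ℓ:ℝ)| ≤ |v + 2 * Real.pi * ℓ| := by
            linarith only [h3, h2, hvb, hint]
          have h5 : (3 * Real.pi / 2 * |(ℓ:ℝ)|) ^ 2 ≤ |v + 2 * Real.pi * ℓ| ^ 2 :=
            pow_le_pow_left₀ (by positivity) h1 2
          rw [mul_pow, sq_abs, sq_abs] at h5
          linarith
        have hdpos : (0:ℝ) < t ^ 2 + (3 * Real.pi / 2) ^ 2 * (ℓ:ℝ) ^ 2 := by positivity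
        have hr2 : r ^ 2 ≤ g ℓ := by
          rw [hrdef, div_pow, hz2, hw2, hgdef]
          simp only [if_neg h]
          exact div_le_div₀ hP.le hnum hdpos hden
        have hgq : g ℓ ≤ q ^ 2 := by
          rw [hq2, hgdef]; simp only [if_neg h]
          apply div_le_div₀ hP.le le_rfl hQ
          have hint := mul_nonneg (by positivity : (0:ℝ) ≤ (3 * Real.pi / 2) ^ 2)
            (by linarith : (0:ℝ) ≤ (ℓ:ℝ) ^ 2 - 1)
          rw [hQdef]; linarith
        have hrq : r ≤ q :=
          (pow_le_pow_iff_left₀ hr0 hq0.le two_ne_zero).mp (le_trans hr2 hgq)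
        rw [if_neg h]
        calc ‖(((1 + (2 * Real.pi * Complex.I * ℓ) / z) ^ (m + 1 + 1))⁻¹ : ℂ)‖
            = r ^ m * r ^ 2 := by rw [habs, ← pow_add]
          _ ≤ q ^ m * g ℓ :=
            mul_le_mul (pow_le_pow_left₀ hr0 hrq m) hr2 (by positivity) (by positivity)
    have hbound : ‖rfn (m + 1) z‖ ≤ q ^ m * S := by
      rw [rfn, hSdef]
      exact tsum_of_norm_bounded ((hgsum.hasSum).mul_left (q ^ m)) hpt
    have heq : (S / q ^ 2) * q ^ (m + 1 + 1) = q ^ m * S := by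
      rw [show m + 1 + 1 = m + 2 from rfl, pow_add]
      field_simp
    rw [heq]; exact hbound
  refine ⟨hq1, S / q ^ 2, key, ?_⟩
  intro v hv
  have hlim : Tendsto (fun n : ℕ => (S / q ^ 2) * q ^ (n + 1)) atTop (nhds 0) := by
    have h1 : Tendsto (fun n : ℕ => q ^ n) atTop (nhds 0) :=
      tendsto_pow_atTop_nhds_zero_of_lt_one hq0.le hq1
    have h2 := h1.const_mul (S / q ^ 2 * q)
    rw [mul_zero] at h2
    refine h2.congr fun n => ?_
    rw [pow_succ]; ring
  refine squeeze_zero' (Eventually.of_forall fun n => norm_nonneg _) ?_ hlim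
  filter_upwards [eventually_ge_atTop 1] with n hn
  exact key n hn v hv
end
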